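/- Let p be a prime, O_L the ring of integers of a finite unramified extension of ℚ_p (a complete discrete valuation ring of characteristic 0 whose maximal ideal is generated by p), and k = O_L/pO_L its residue field. Let G' be a family of matrices over O_L, each having n columns (and arbitrary finite numbers of rows), such that the intersection over all D' ∈ G' of the kernels of the reductions D' mod p (as linear maps k^n → k^{rows(D')}) is {0}. Then there exist finitely many members D'_1,…,D'_m of G', with D'_i ∈ M_{n_i,n}(O_L), and matrices C_i ∈ M_{n,n_i}(O_L), 1 ≤ i ≤ m, such that Σ_{i=1}^m C_i D'_i ∈ GL_n(O_L). -/

import Mathlib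

/-- Lemma `ker_zero`.  If the reductions mod `p` of a family of matrices
over `O_L` (each with `n` columns) have trivial common kernel, then a finite
subfamily admits left factors whose combination is invertible. -/
theorem ker_zero
    (p : ℕ) (hp : p.Prime)
    (O : Type) [CommRing O] [IsDomain O] [IsDiscreteValuationRing O] [CharZero O]
    (hmax : IsLocalRing.maximalIdeal O = Ideal.span {(p : O)})
    (hfin : Finite (IsLocalRing.ResidueField O))
    (hcomplete : IsAdicComplete (IsLocalRing.maximalIdeal O) O)
    (n : ℕ) (ι : Type) (nr : ι → ℕ)
    (Dfam : (i : ι) → Matrix (Fin (nr i)) (Fin n) O)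
    (hker : (⨅ i : ι, LinearMap.ker
        (Matrix.mulVecLin ((Dfam i).map (IsLocalRing.residue O)))) = ⊥) :
    ∃ (m : ℕ) (idx : Fin m → ι)
      (C : (t : Fin m) → Matrix (Fin n) (Fin (nr (idx t))) O),
      IsUnit (∑ t : Fin m, C t * Dfam (idx t)) := by
  classical
  set k := IsLocalRing.ResidueField O
  set J := Σ i : ι, Fin (nr i) with hJ
  set rows : J → (Fin n → k) := fun j l => IsLocalRing.residue O (Dfam j.1 j.2 l) with hrows
  -- Step 1: rows span everything
  have hspan : Submodule.span k (Set.range rows) = ⊤ := by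
    by_contra hne
    have hann : (Submodule.span k (Set.range rows)).dualAnnihilator ≠ ⊥ := by
      intro h
      apply hne
      rw [← Submodule.dualAnnihilator_top] at h
      exact Subspace.dualAnnihilator_inj.mp h
    obtain ⟨φ, hφmem, hφne⟩ := Submodule.exists_mem_ne_zero_of_ne_bot hann
    set v : Fin n → k := fun l => φ (Pi.single l (1 : k)) with hv
    have hrep : ∀ w : Fin n → k, φ w = dotProduct w v := by
      intro w
      have hw' : w = ∑ l, w l • (Pi.single l (1 : k) : Fin n → k) := by
        ext a; simp [Pi.single_apply]
      conv_lhs => rw [hw']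
      rw [map_sum]
      simp [dotProduct, hv]
    have hdot : ∀ w : Fin n → k, w ∈ Submodule.span k (Set.range rows) →
        dotProduct w v = 0 := by
      intro w hw
      rw [← hrep]
      exact (Submodule.mem_dualAnnihilator φ).mp hφmem w hw
    have hv0 : v = 0 := by
      have hmem : v ∈ (⨅ i : ι, LinearMap.ker
          (Matrix.mulVecLin ((Dfam i).map (IsLocalRing.residue O)))) := by
        rw [Submodule.mem_iInf]
        intro i
        rw [LinearMap.mem_ker]
        funext r
        have := hdot (rows ⟨i, r⟩) (Submodule.subset_span ⟨⟨i, r⟩, rfl⟩)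
        simpa [Matrix.mulVecLin_apply, Matrix.mulVec, dotProduct, hrows] using this
      rw [hker] at hmem
      simpa using hmem
    apply hφne
    refine LinearMap.ext fun w => ?_
    rw [hrep w, hv0]
    simp
  -- Step 2: extract a basis from the rows
  obtain ⟨b, hbsub, hbspan, hbind⟩ := exists_linearIndependent k (Set.range rows)
  rw [hspan] at hbspan
  have hbfin : b.Finite := hbind.setFinite
  have : Fintype b := hbfin.fintype
  have hbasis : Module.Basis b k (Fin n → k) :=
    Module.Basis.mk hbind (by rw [Subtype.range_coe]; exact hbspan.ge)
  have hcard : Fintype.card b = n := by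
    have h1 := Module.finrank_eq_card_basis hbasis
    have h2 : Module.finrank k (Fin n → k) = n := by simp
    omega
  have e : Fin n ≃ b := (Fintype.equivFinOfCardEq hcard).symm
  have hpre : ∀ t : Fin n, ∃ j : J, rows j = (e t : Fin n → k) := fun t => hbsub (e t).2
  choose f hf using hpre
  refine ⟨n, fun t => (f t).1, fun t => Matrix.single t (f t).2 (1 : O), ?_⟩
  set B : Matrix (Fin n) (Fin n) O := Matrix.of (fun t l => Dfam (f t).1 (f t).2 l) with hB
  have hsum : (∑ t : Fin n, Matrix.single t (f t).2 (1 : O) * Dfam (f t).1) = B := by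
    ext a l
    rw [Matrix.sum_apply]
    rw [Finset.sum_eq_single a]
    · simp [Matrix.mul_apply, Matrix.single, ite_and, boole_mul, hB]
    · intro t _ hta
      simp [Matrix.mul_apply, Matrix.single, ite_and, boole_mul, hta]
    · simp
  rw [hsum]
  have hBmap : IsUnit (B.map (IsLocalRing.residue O)) := by
    rw [← Matrix.linearIndependent_rows_iff_isUnit]
    have hrw : (fun t : Fin n => (B.map (IsLocalRing.residue O)) t) =
        (fun t : Fin n => ((e t : Fin n → k))) := by
      funext t
      exact hf t
    show LinearIndependent k (fun t : Fin n => (B.map (IsLocalRing.residue O)) t); rw [hrw]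
    exact hbind.comp (fun t => e t) (fun s t hst => e.injective hst)
  have hdet : IsUnit B.det := by
    rw [← IsLocalRing.residue_ne_zero_iff_isUnit, RingHom.map_det]
    exact (hBmap.map Matrix.detMonoidHom).ne_zero
  exact (Matrix.isUnit_iff_isUnit_det B).mpr hdet
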